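/- Let q be holomorphic near t_k > 0 with q(t_k) = ε ∈ {+1,-1} and q(t) = ε + d_k(t-t_k) + O((t-t_k)²) where d_k ≠ 0, and suppose q satisfies t(q²-1)(tq_t)_t = q(tq_t)² + (1/4)(t-α²)q + (1/4)tq³(q²-2). Then d_k²·t_k² = α²/4. -/

import Mathlib

open Asymptotics

/-- if `q` is holomorphic near `t_k > 0` with `q(t_k) = ε ∈ {±1}`,
`q(t) = ε + d_k(t-t_k) + O((t-t_k)²)`, `d_k ≠ 0`, and `q` satisfies
`t(q²-1)(tq')' = q(tq')² + (1/4)(t-α²)q + (1/4)tq³(q²-2)`, then `d_k² t_k² = α²/4`. -/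
theorem taylor_coefficient_constraint
    (tk : ℝ) (htk : 0 < tk) (α : ℝ) (ε : ℂ) (hε : ε = 1 ∨ ε = -1)
    (d : ℂ) (hd : d ≠ 0) (ρ : ℝ) (hρ : 0 < ρ) (q : ℂ → ℂ)
    (hq : AnalyticOnNhd ℂ q (Metric.ball (tk : ℂ) ρ))
    (hval : q (tk : ℂ) = ε)
    (hTaylor : (fun t => q t - (ε + d * (t - (tk : ℂ)))) =O[nhds (tk : ℂ)]
      fun t => (t - (tk : ℂ)) ^ 2)
    (hODE : ∀ t ∈ Metric.ball (tk : ℂ) ρ,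
      t * ((q t) ^ 2 - 1) * deriv (fun s => s * deriv q s) t
        = q t * (t * deriv q t) ^ 2 + (1 / 4) * (t - (α : ℂ) ^ 2) * q t
          + (1 / 4) * t * (q t) ^ 3 * ((q t) ^ 2 - 2)) :
    d ^ 2 * (tk : ℂ) ^ 2 = (α : ℂ) ^ 2 / 4 := by
  have hε2 : ε ^ 2 = 1 := by rcases hε with h | h <;> simp [h] <;> ring
  have hε3 : ε ^ 3 = ε := by rcases hε with h | h <;> simp [h] <;> ring
  have hε0 : ε ≠ 0 := by rcases hε with h | h <;> simp [h] <;> ring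
  have hmem : (tk : ℂ) ∈ Metric.ball (tk : ℂ) ρ := Metric.mem_ball_self hρ
  -- the derivative of q at tk is d
  have h1 : (fun t : ℂ => (t - (tk : ℂ)) ^ 2) =o[nhds (tk : ℂ)]
      fun t => t - (tk : ℂ) := by
    have h0 : (fun t : ℂ => t - (tk : ℂ)) =o[nhds (tk : ℂ)] fun _ => (1 : ℂ) := by
      rw [isLittleO_one_iff]
      have := (continuous_id.sub (continuous_const (y := (tk : ℂ)))).tendsto (tk : ℂ)
      simpa [Pi.sub_def] using this
    simpa [pow_two, one_mul] using
      h0.mul_isBigO (isBigO_refl (fun t : ℂ => t - (tk : ℂ)) _)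
  have hderiv : HasDerivAt q d (tk : ℂ) := by
    rw [hasDerivAt_iff_isLittleO]
    have h2 := hTaylor.trans_isLittleO h1
    have heq : (fun t : ℂ => q t - q (tk : ℂ) - (t - (tk : ℂ)) • d)
        = fun t => q t - (ε + d * (t - (tk : ℂ))) := by
      funext t; simp [hval, smul_eq_mul]; ring
    rw [heq]; exact h2
  have heq := hODE (tk : ℂ) hmem
  rw [hval, hderiv.deriv, hε3, hε2] at heq
  have key : ε * (d ^ 2 * (tk : ℂ) ^ 2 - (α : ℂ) ^ 2 / 4) = 0 := by
    linear_combination -heq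
  rcases mul_eq_zero.mp key with h | h
  · exact absurd h hε0
  · exact sub_eq_zero.mp h
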